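/- Let L be an even hyperbolic lattice and let u, v ∈ L satisfy ⟨u,u⟩ > 0, ⟨v,v⟩ > 0 and ⟨u,v⟩ > 0 (so u and v lie in the same positive cone). Then for every negative integer d, the set {x ∈ L : ⟨x,u⟩ > 0, ⟨x,v⟩ < 0, and ⟨x,x⟩ = d} is finite. -/
import Mathlib

open Matrix

/-- The intersection form of the lattice `ℤ^n` with Gram matrix `G`. -/
def latticePairing {n : ℕ} (G : Matrix (Fin n) (Fin n) ℤ) (x y : Fin n → ℤ) : ℤ :=
  x ⬝ᵥ G.mulVec y

/-- `G` is the Gram matrix of an even hyperbolic lattice: the rank is `> 1`, the form is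
symmetric, `⟨v,v⟩` is even for all `v`, and the real quadratic space has signature
`(1, n-1)`, expressed by a diagonalization over `ℝ` with diagonal `(1, -1, …, -1)`. -/
def IsEvenHyperbolic {n : ℕ} (G : Matrix (Fin n) (Fin n) ℤ) : Prop :=
  1 < n ∧ G.IsSymm ∧ (∀ v : Fin n → ℤ, Even (latticePairing G v v)) ∧
    ∃ P : Matrix (Fin n) (Fin n) ℝ, IsUnit P.det ∧
      Pᵀ * (G.map (Int.cast : ℤ → ℝ)) * P =
        Matrix.diagonal (fun i : Fin n => if (i : ℕ) = 0 then (1 : ℝ) else -1)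

lemma key_bound {t p q su sv sxu sxv sx e : ℝ} (hsu0 : 0 ≤ su) (hsv0 : 0 ≤ sv)
    (hu' : 0 < p * p - su) (hv' : 0 < q * q - sv) (hpq : 0 < p * q) (he : 0 < e)
    (ha : 0 < t * p - sxu) (hc : t * q - sxv < 0) (hsx : sx = t * t + e)
    (hcsu : sxu ^ 2 ≤ sx * su) (hcsv : sxv ^ 2 ≤ sx * sv) :
    t * t ≤ max (e * su / (p * p - su)) (e * sv / (q * q - sv)) := by
  by_cases h : 0 ≤ t * q
  · have h5 : t * q < sxv := by linarith
    have h6 : (t * q) ^ 2 ≤ sxv ^ 2 := by nlinarith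
    have h7 : t * t * (q * q - sv) ≤ e * sv := by nlinarith
    have h8 : t * t ≤ e * sv / (q * q - sv) := by
      rw [le_div_iff₀ hv']; linarith
    exact le_trans h8 (le_max_right _ _)
  · push_neg at h
    have htp : t * p < 0 := by
      rcases lt_trichotomy (t * p) 0 with h1 | h1 | h1
      · exact h1
      · exfalso
        have hp0 : p ≠ 0 := by intro hp0; rw [hp0] at hu'; nlinarith
        rcases mul_eq_zero.mp h1 with ht0 | hp0'
        · rw [ht0] at h; simp at h
        · exact hp0 hp0'
      · exfalso
        nlinarith [mul_self_nonneg t]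
    have h5 : sxu < t * p := by linarith
    have h6 : (t * p) ^ 2 ≤ sxu ^ 2 := by nlinarith
    have h7 : t * t * (p * p - su) ≤ e * su := by nlinarith
    have h8 : t * t ≤ e * su / (p * p - su) := by
      rw [le_div_iff₀ hu']; linarith
    exact le_trans h8 (le_max_left _ _)

lemma abs_le_one_add_sq (y : ℝ) : |y| ≤ 1 + y ^ 2 := by
  rcases abs_cases y with ⟨h, _⟩ | ⟨h, _⟩ <;> nlinarith [sq_nonneg (y - 1), sq_nonneg (y + 1)]

/-- In an even hyperbolic lattice, if `u, v` are vectors of positive square-norm lying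
in the same positive cone (i.e. `⟨u,v⟩ > 0`), then for every negative integer `d` the set
`{x ∈ L : ⟨x,u⟩ > 0, ⟨x,v⟩ < 0, ⟨x,x⟩ = d}` is finite. -/
theorem finiteness_of_separating_vectors {n : ℕ} (G : Matrix (Fin n) (Fin n) ℤ)
    (hG : IsEvenHyperbolic G) (u v : Fin n → ℤ)
    (hu : 0 < latticePairing G u u) (hv : 0 < latticePairing G v v)
    (huv : 0 < latticePairing G u v) (d : ℤ) (hd : d < 0) :
    {x : Fin n → ℤ | 0 < latticePairing G x u ∧ latticePairing G x v < 0 ∧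
      latticePairing G x x = d}.Finite := by
  classical
  obtain ⟨hn, hsymm, -, P, hPdet, hdiag⟩ := hG
  set GR : Matrix (Fin n) (Fin n) ℝ := G.map (Int.cast : ℤ → ℝ) with hGRdef
  set D : Matrix (Fin n) (Fin n) ℝ :=
    Matrix.diagonal (fun i : Fin n => if (i : ℕ) = 0 then (1 : ℝ) else -1) with hDdef
  set Q : Matrix (Fin n) (Fin n) ℝ := P⁻¹ with hQdef
  have hPQ : P * Q = 1 := Matrix.mul_nonsing_inv P hPdet
  have hGReq : GR = Qᵀ * D * Q := by
    calc GR = (P * Q)ᵀ * GR * (P * Q) := by rw [hPQ]; simp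
      _ = Qᵀ * (Pᵀ * GR * P) * Q := by
          rw [Matrix.transpose_mul]; simp only [Matrix.mul_assoc]
      _ = Qᵀ * D * Q := by rw [hdiag]
  set z0 : Fin n := ⟨0, by omega⟩ with hz0def
  -- the spatial (negative-definite part) pairing
  set sp : (Fin n → ℝ) → (Fin n → ℝ) → ℝ :=
    fun Y Z => ∑ i ∈ Finset.univ.erase z0, Y i * Z i with hspdef
  have hsp_nonneg : ∀ Y, 0 ≤ sp Y Y :=
    fun Y => Finset.sum_nonneg fun i _ => mul_self_nonneg (Y i)
  have hCS : ∀ Y Z, (sp Y Z) ^ 2 ≤ sp Y Y * sp Z Z := by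
    intro Y Z
    simpa only [hspdef, pow_two] using
      Finset.sum_mul_sq_le_sq_mul_sq (Finset.univ.erase z0) Y Z
  have hsingle : ∀ (Y : Fin n → ℝ) (i : Fin n), i ≠ z0 → Y i * Y i ≤ sp Y Y := by
    intro Y i hi
    exact Finset.single_le_sum (fun j _ => mul_self_nonneg (Y j))
      (Finset.mem_erase.mpr ⟨hi, Finset.mem_univ i⟩)
  -- Minkowski form of the diagonal pairing
  have hmink : ∀ Y Z : Fin n → ℝ, Y ⬝ᵥ D *ᵥ Z = Y z0 * Z z0 - sp Y Z := by
    intro Y Z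
    have h1 : Y ⬝ᵥ D *ᵥ Z =
        ∑ i, Y i * ((if (i : ℕ) = 0 then (1 : ℝ) else -1) * Z i) := by
      simp [dotProduct, hDdef, Matrix.mulVec_diagonal]
    rw [h1, ← Finset.add_sum_erase _ _ (Finset.mem_univ z0)]
    have h2 : ∀ i ∈ Finset.univ.erase z0,
        Y i * ((if (i : ℕ) = 0 then (1 : ℝ) else -1) * Z i) = -(Y i * Z i) := by
      intro i hi
      rw [if_neg]
      · ring
      · exact fun h => (Finset.mem_erase.mp hi).1 (Fin.ext h)
    rw [Finset.sum_congr rfl h2, Finset.sum_neg_distrib]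
    have : ((z0 : ℕ) = 0) := rfl
    rw [if_pos this]
    ring
  -- the coordinate map
  set F : (Fin n → ℤ) → (Fin n → ℝ) := fun x => Q *ᵥ (fun i => (x i : ℝ)) with hFdef
  have hpair : ∀ x y : Fin n → ℤ,
      ((latticePairing G x y : ℤ) : ℝ) = F x z0 * F y z0 - sp (F x) (F y) := by
    intro x y
    rw [← hmink]
    have hcast : ((latticePairing G x y : ℤ) : ℝ) =
        (fun i => (x i : ℝ)) ⬝ᵥ GR *ᵥ (fun i => (y i : ℝ)) := by
      simp only [latticePairing, dotProduct, Matrix.mulVec, hGRdef, Matrix.map_apply,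
        dotProduct]
      push_cast
      rfl
    rw [hcast, hGReq]
    rw [← Matrix.mulVec_mulVec, ← Matrix.mulVec_mulVec]
    rw [Matrix.dotProduct_mulVec, Matrix.vecMul_transpose]
  -- notation for the images of u, v
  set p : ℝ := F u z0 with hpdef
  set q : ℝ := F v z0 with hqdef
  set su : ℝ := sp (F u) (F u) with hsudef
  set sv : ℝ := sp (F v) (F v) with hsvdef
  -- basic positivity facts
  have hu' : (0 : ℝ) < p * p - su := by
    have h := hpair u u
    have : (0 : ℝ) < ((latticePairing G u u : ℤ) : ℝ) := by exact_mod_cast hu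
    rw [h] at this; linarith
  have hv' : (0 : ℝ) < q * q - sv := by
    have h := hpair v v
    have : (0 : ℝ) < ((latticePairing G v v : ℤ) : ℝ) := by exact_mod_cast hv
    rw [h] at this; linarith
  have huv' : (0 : ℝ) < p * q - sp (F u) (F v) := by
    have h := hpair u v
    have : (0 : ℝ) < ((latticePairing G u v : ℤ) : ℝ) := by exact_mod_cast huv
    rw [h] at this; linarith
  have hsu0 : 0 ≤ su := hsp_nonneg _
  have hsv0 : 0 ≤ sv := hsp_nonneg _
  have hpq : 0 < p * q := by
    by_contra hcon
    push_neg at hcon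
    have hcs := hCS (F u) (F v)
    nlinarith [sq_nonneg (sp (F u) (F v))]
  -- the constants
  set e : ℝ := -(d : ℝ) with hedef
  have he : 0 < e := by
    have : (d : ℝ) < 0 := by exact_mod_cast hd
    rw [hedef]; linarith
  set A : ℝ := e * su / (p * p - su) with hAdef
  set B : ℝ := e * sv / (q * q - sv) with hBdef
  set T : ℝ := max A B with hTdef
  have hT0 : 0 ≤ T :=
    le_trans (div_nonneg (mul_nonneg he.le hsu0) hu'.le) (le_max_left A B)
  set C : ℝ := 2 * T + e with hCdef
  have hC0 : 0 < C := by rw [hCdef]; linarith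
  set E : ℝ := ∑ i, ∑ j, |P i j| with hEdef
  set R : ℝ := E * (1 + C) with hRdef
  set m : ℤ := ⌈R⌉ with hmdef
  -- the target set is contained in a finite box
  apply Set.Finite.subset (Set.Finite.pi fun _ : Fin n => Set.finite_Icc (-m) m)
  intro x hx
  obtain ⟨hxu, hxv, hxx⟩ := hx
  set t : ℝ := F x z0 with htdef
  set sx : ℝ := sp (F x) (F x) with hsxdef
  have ha : 0 < t * p - sp (F x) (F u) := by
    have h := hpair x u
    have : (0 : ℝ) < ((latticePairing G x u : ℤ) : ℝ) := by exact_mod_cast hxu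
    rw [h] at this; linarith
  have hc : t * q - sp (F x) (F v) < 0 := by
    have h := hpair x v
    have : ((latticePairing G x v : ℤ) : ℝ) < 0 := by exact_mod_cast hxv
    rw [h] at this; linarith
  have hsx : sx = t * t + e := by
    have h := hpair x x
    have h2 : ((latticePairing G x x : ℤ) : ℝ) = (d : ℝ) := by exact_mod_cast hxx
    rw [h2] at h
    rw [hedef]; linarith
  have hcsu : (sp (F x) (F u)) ^ 2 ≤ sx * su := hCS (F x) (F u)
  have hcsv : (sp (F x) (F v)) ^ 2 ≤ sx * sv := hCS (F x) (F v)
  have hkey : t * t ≤ T := by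
    rw [hTdef, hAdef, hBdef]
    exact key_bound hsu0 hsv0 hu' hv' hpq he ha hc hsx hcsu hcsv
  -- bound all coordinates of F x
  have hcoord : ∀ i, F x i * F x i ≤ C := by
    intro i
    by_cases hi : i = z0
    · rw [hi]
      have : F x z0 * F x z0 = t * t := by rw [htdef]
      rw [this, hCdef]; linarith
    · have h1 := hsingle (F x) i hi
      rw [← hsxdef] at h1
      rw [hCdef]
      have : sx ≤ T + e := by rw [hsx]; linarith
      linarith
  have habs : ∀ i, |F x i| ≤ 1 + C := by
    intro i
    refine le_trans (abs_le_one_add_sq _) ?_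
    have := hcoord i
    nlinarith [hcoord i]
  -- recover x from F x
  have hrec : (fun i => ((x i : ℤ) : ℝ)) = P *ᵥ F x := by
    rw [hFdef]
    simp only [Matrix.mulVec_mulVec, hPQ, Matrix.one_mulVec]
  have hbound : ∀ i, |((x i : ℤ) : ℝ)| ≤ R := by
    intro i
    have h1 : ((x i : ℤ) : ℝ) = ∑ j, P i j * F x j := by
      rw [show ((x i : ℤ) : ℝ) = (fun i => ((x i : ℤ) : ℝ)) i from rfl, hrec]
      rfl
    rw [h1]
    calc |∑ j, P i j * F x j| ≤ ∑ j, |P i j * F x j| :=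
          Finset.abs_sum_le_sum_abs _ _
      _ ≤ ∑ j, |P i j| * (1 + C) := by
          apply Finset.sum_le_sum
          intro j _
          rw [abs_mul]
          exact mul_le_mul_of_nonneg_left (habs j) (abs_nonneg _)
      _ = (∑ j, |P i j|) * (1 + C) := by rw [← Finset.sum_mul]
      _ ≤ E * (1 + C) := by
          refine mul_le_mul_of_nonneg_right ?_ (by linarith : (0:ℝ) ≤ 1 + C)
          exact Finset.single_le_sum (f := fun k => ∑ j, |P k j|)
            (fun k _ => Finset.sum_nonneg fun j _ => abs_nonneg _) (Finset.mem_univ i)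
      _ = R := rfl
  intro i _
  have h1 := hbound i
  have h2 : |((x i : ℤ) : ℝ)| ≤ (m : ℝ) := le_trans h1 (Int.le_ceil R)
  rw [← Int.cast_abs] at h2
  have h3 : |x i| ≤ m := by exact_mod_cast h2
  exact Set.mem_Icc.mpr (abs_le.mp h3)
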